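/- arXiv:1804.04322 — 2 statements merged into one kernel-verified Lean document; each statement's English description precedes it below -/
import Mathlib

section
/- If G is a 2×2 complex matrix satisfying ‖G^j‖ ≤ M for all 1 ≤ j ≤ N (with M ≥ 1), and G_1,…,G_N are 2×2 matrices with ‖G_j − G‖ ≤ δ for all j, and N·M·δ < 1/2, then for every 1 ≤ n ≤ N the ordered product G_n·G_{n−1}···G_1 satisfies ‖G_n···G_1 − G^n‖ ≤ 2·N·M²·δ. -/
open scoped Matrix.Norms.L2Operator

/-- If `G` is a 2×2 complex matrix with `‖G^j‖ ≤ M` for all `1 ≤ j ≤ N` (`M ≥ 1`),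
and `G_1, …, G_N` satisfy `‖G_j - G‖ ≤ δ`, with `N·M·δ < 1/2`, then for every `1 ≤ n ≤ N`
the ordered product `G_n ⋯ G_1` satisfies `‖G_n ⋯ G_1 - G^n‖ ≤ 2·N·M²·δ`. -/
theorem stmt0 (G : Matrix (Fin 2) (Fin 2) ℂ) (Gs : ℕ → Matrix (Fin 2) (Fin 2) ℂ)
    (N : ℕ) (hN : 0 < N) (M δ : ℝ) (hM : 1 ≤ M) (hδ : 0 ≤ δ)
    (hpow : ∀ j : ℕ, 1 ≤ j → j ≤ N → ‖G ^ j‖ ≤ M)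
    (hclose : ∀ j : ℕ, 1 ≤ j → j ≤ N → ‖Gs j - G‖ ≤ δ)
    (hsmall : (N : ℝ) * M * δ < 1 / 2) :
    ∀ n : ℕ, 1 ≤ n → n ≤ N →
      ‖(((List.range' 1 n).reverse.map Gs).prod) - G ^ n‖ ≤ 2 * N * M ^ 2 * δ := by
  set P : ℕ → Matrix (Fin 2) (Fin 2) ℂ :=
    fun n => ((List.range' 1 n).reverse.map Gs).prod with hP
  have hPsucc : ∀ n : ℕ, P (n + 1) = Gs (n + 1) * P n := by
    intro n
    simp only [hP, List.range'_concat, List.reverse_append, List.map_append,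
      List.prod_append, List.map_cons, List.prod_cons, List.reverse_cons,
      List.map_nil, List.prod_nil, List.reverse_nil, List.nil_append, mul_one,
      one_mul, mul_one]
    rw [add_comm 1 n]
  have hGpow : ∀ k : ℕ, k ≤ N → ‖G ^ k‖ ≤ M := by
    intro k hk
    rcases Nat.eq_zero_or_pos k with h | h
    · simpa [h] using hM
    · exact hpow k h hk
  have formula : ∀ n : ℕ,
      P n - G ^ n = ∑ k ∈ Finset.range n, G ^ (n - 1 - k) * ((Gs (k + 1) - G) * P k) := by
    intro n
    induction n with
    | zero => simp [hP]
    | succ n ih =>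
      rw [Finset.sum_range_succ, hPsucc, pow_succ']
      have step : Gs (n + 1) * P n - G * G ^ n
          = G * (P n - G ^ n) + (Gs (n + 1) - G) * P n := by noncomm_ring
      rw [step, ih, Finset.mul_sum]
      have hterm : ∀ k ∈ Finset.range n,
          G * (G ^ (n - 1 - k) * ((Gs (k + 1) - G) * P k))
          = G ^ (n + 1 - 1 - k) * ((Gs (k + 1) - G) * P k) := by
        intro k hk
        rw [Finset.mem_range] at hk
        have : n + 1 - 1 - k = (n - 1 - k) + 1 := by omega
        rw [this, pow_succ', mul_assoc]
      rw [Finset.sum_congr rfl hterm]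
      have : n + 1 - 1 - n = 0 := by omega
      rw [this, pow_zero, one_mul]
  have key : ∀ n : ℕ, n ≤ N → ‖P n - G ^ n‖ ≤ 2 * n * M ^ 2 * δ := by
    intro n
    induction n using Nat.strong_induction_on with
    | _ n ih =>
      intro hn
      rw [formula n]
      have hM0 : (0:ℝ) ≤ M := le_trans zero_le_one hM
      calc ‖∑ k ∈ Finset.range n, G ^ (n - 1 - k) * ((Gs (k + 1) - G) * P k)‖
          ≤ ∑ k ∈ Finset.range n, ‖G ^ (n - 1 - k) * ((Gs (k + 1) - G) * P k)‖ :=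
            norm_sum_le _ _
        _ ≤ ∑ _k ∈ Finset.range n, M * (δ * (M + 2 * N * M ^ 2 * δ)) := by
            apply Finset.sum_le_sum
            intro k hk
            rw [Finset.mem_range] at hk
            have h1 : ‖G ^ (n - 1 - k)‖ ≤ M := hGpow _ (by omega)
            have h2 : ‖Gs (k + 1) - G‖ ≤ δ := hclose (k + 1) (by omega) (by omega)
            have h3 : ‖P k‖ ≤ M + 2 * N * M ^ 2 * δ := by
              have hEk : ‖P k - G ^ k‖ ≤ 2 * k * M ^ 2 * δ := ih k hk (by omega)
              have hGk : ‖G ^ k‖ ≤ M := hGpow k (by omega)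
              have : ‖P k‖ ≤ ‖G ^ k‖ + ‖P k - G ^ k‖ := by
                have := norm_add_le (G ^ k) (P k - G ^ k)
                simpa using this
              have hkN : (k:ℝ) ≤ N := by exact_mod_cast Nat.le_of_lt (lt_of_lt_of_le hk hn)
              nlinarith [sq_nonneg M, mul_nonneg (mul_nonneg hM0 hM0) hδ]
            calc ‖G ^ (n - 1 - k) * ((Gs (k + 1) - G) * P k)‖
                ≤ ‖G ^ (n - 1 - k)‖ * ‖(Gs (k + 1) - G) * P k‖ := norm_mul_le _ _
              _ ≤ ‖G ^ (n - 1 - k)‖ * (‖Gs (k + 1) - G‖ * ‖P k‖) := by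
                  gcongr; exact norm_mul_le _ _
              _ ≤ M * (δ * (M + 2 * N * M ^ 2 * δ)) := by
                  apply mul_le_mul h1 _ (by positivity) hM0
                  apply mul_le_mul h2 h3 (norm_nonneg _) hδ
        _ = n * (M * (δ * (M + 2 * N * M ^ 2 * δ))) := by
            rw [Finset.sum_const, Finset.card_range, nsmul_eq_mul]
        _ ≤ 2 * n * M ^ 2 * δ := by
            have hnN : (n:ℝ) ≤ N := by exact_mod_cast hn
            have hn0 : (0:ℝ) ≤ n := Nat.cast_nonneg n
            have nn : (0:ℝ) ≤ (n:ℝ) * M ^ 2 * δ := by positivity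
            nlinarith [mul_le_mul_of_nonneg_left hsmall.le nn]
  intro n h1 h2
  have := key n h2
  have hnN : (n:ℝ) ≤ N := by exact_mod_cast h2
  have hM0 : (0:ℝ) ≤ M := le_trans zero_le_one hM
  nlinarith [mul_nonneg (mul_nonneg hM0 hM0) hδ]
end

section
/- Let Δ ⊂ [0,1] be an interval with |Δ| > 1/q_n, where q_n is a continued fraction denominator of the irrational α. Then for any θ ∈ [0,1], there exists j ∈ {0, 1, …, q_n + q_{n−1} − 1} such that θ + jα mod 1 ∈ Δ. -/
/-- The `n`-th continued fraction denominator of `α`. -/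
noncomputable def cfDen (α : ℝ) (n : ℕ) : ℝ := (GenContFract.of α).dens n

open GenContFract

/-- The abstract "walk" lemma. -/
lemma walk_lemma (α θ a b : ℝ) (ha : 0 ≤ a) (hb : b ≤ 1) (A B : ℕ) (sA sB : ℝ)
    (hsA : 0 < sA) (hsB : 0 < sB) (hsA' : sA < b - a) (hsB' : sB < b - a)
    (zA : ℤ) (hzA : (A : ℝ) * α = zA + sA) (zB : ℤ) (hzB : (B : ℝ) * α = zB - sB) :
    ∃ j : ℕ, j < A + B ∧ Int.fract (θ + j * α) ∈ Set.Ioo a b := by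
  have hba1 : b - a ≤ 1 := by linarith
  have hAB : 0 < A + B := by
    rcases Nat.eq_zero_or_pos (A + B) with h0 | h
    · exfalso
      have hA : A = 0 := by omega
      rw [hA] at hzA
      simp at hzA
      have h1 : (0:ℝ) < -zA := by linarith
      have h2 : (-zA : ℝ) < 1 := by linarith
      have h1' : (0:ℤ) < -zA := by exact_mod_cast h1
      have h2' : (-zA : ℤ) < 1 := by exact_mod_cast h2
      omega
    · exact h
  by_contra hcon
  push_neg at hcon
  set m : ℤ := ⌈θ - a⌉ with hm
  have hmge : θ - a ≤ m := Int.le_ceil _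
  have key : ∀ j : ℕ, j < A + B → ∀ z : ℤ, ¬(a < θ + j * α - z ∧ θ + j * α - z < b) := by
    intro j hj z ⟨h1, h2⟩
    have hy0 : (0:ℝ) ≤ θ + j * α - z := by linarith
    have hy1 : θ + j * α - z < 1 := by linarith
    have : Int.fract (θ + j * α) = θ + j * α - z := by
      rw [Int.fract_eq_iff]
      exact ⟨hy0, hy1, ⟨z, by ring⟩⟩
    exact hcon j hj (by rw [this]; exact ⟨h1, h2⟩)
  set ε : ℝ := min sA sB with hε
  have hεpos : 0 < ε := lt_min hsA hsB
  have S : ∀ k : ℕ, ∃ j : ℕ, j < A + B ∧ ∃ z : ℤ,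
      θ + j * α - z ≤ a + m ∧ θ + k * ε ≤ θ + j * α - z := by
    intro k
    induction k with
    | zero => exact ⟨0, hAB, 0, by push_cast; constructor <;> linarith⟩
    | succ k ih =>
      obtain ⟨j, hj, z, h1, h2⟩ := ih
      by_cases hc : j < B
      · -- step j + A, y += sA
        have hj' : j + A < A + B := by omega
        have heq : θ + ((j + A : ℕ) : ℝ) * α - ((z + zA : ℤ) : ℝ)
            = (θ + j * α - z) + sA := by push_cast; nlinarith [hzA]
        refine ⟨j + A, hj', z + zA, ?_, ?_⟩
        · by_contra hgt
          push_neg at hgt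
          rw [heq] at hgt
          refine key (j + A) hj' (z + zA + m) ⟨?_, ?_⟩ <;>
            · have : θ + ((j + A : ℕ) : ℝ) * α - ((z + zA + m : ℤ) : ℝ)
                  = (θ + j * α - z) + sA - m := by push_cast; push_cast at heq; linarith
              rw [this]; linarith
        · rw [heq]
          have hmin : ε ≤ sA := min_le_left _ _
          push_cast; linarith
      · -- step j - B, y += sB
        have hj' : j - B < A + B := by omega
        have heq : θ + ((j - B : ℕ) : ℝ) * α - ((z - zB : ℤ) : ℝ)
            = (θ + j * α - z) + sB := by
          push_cast [Nat.cast_sub (by omega : B ≤ j)]; nlinarith [hzB]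
        refine ⟨j - B, hj', z - zB, ?_, ?_⟩
        · by_contra hgt
          push_neg at hgt
          rw [heq] at hgt
          refine key (j - B) hj' (z - zB + m) ⟨?_, ?_⟩ <;>
            · have : θ + ((j - B : ℕ) : ℝ) * α - ((z - zB + m : ℤ) : ℝ)
                  = (θ + j * α - z) + sB - m := by
                push_cast [Nat.cast_sub (by omega : B ≤ j)]
                push_cast [Nat.cast_sub (by omega : B ≤ j)] at heq
                linarith
              rw [this]; linarith
        · rw [heq]
          have hmin : ε ≤ sB := min_le_right _ _
          push_cast; linarith
  obtain ⟨k, hk⟩ := exists_nat_gt ((a + m - θ) / ε)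
  obtain ⟨j, hj, z, h1, h2⟩ := S k
  have h3 : a + m - θ < k * ε := by
    rw [div_lt_iff₀ hεpos] at hk; linarith
  linarith

/-- Integrality of continuants of the continued fraction of a real number. -/
lemma contsAux_int (α : ℝ) (hnt : ∀ k, ¬(GenContFract.of α).TerminatedAt k) :
    ∀ k, (∃ p : ℤ, ((GenContFract.of α).contsAux k).a = p) ∧
      (∃ q : ℕ, ((GenContFract.of α).contsAux k).b = q) := by
  set g := GenContFract.of α with hg
  have step : ∀ k, ((∃ p : ℤ, (g.contsAux k).a = p) ∧ (∃ q : ℕ, (g.contsAux k).b = q)) →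
      ((∃ p : ℤ, (g.contsAux (k+1)).a = p) ∧ (∃ q : ℕ, (g.contsAux (k+1)).b = q)) →
      ((∃ p : ℤ, (g.contsAux (k+2)).a = p) ∧ (∃ q : ℕ, (g.contsAux (k+2)).b = q)) := by
    intro k ⟨⟨pp, hpp⟩, ⟨qp, hqp⟩⟩ ⟨⟨p, hp⟩, ⟨q, hq⟩⟩
    obtain ⟨gp, hgp⟩ : ∃ gp, g.s.get? k = some gp :=
      Option.ne_none_iff_exists'.1 (hnt k)
    have ha1 : gp.a = 1 := of_partNum_eq_one (partNum_eq_s_a hgp)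
    have hb1 : (1:ℝ) ≤ gp.b := of_one_le_get?_partDen (partDen_eq_s_b hgp)
    obtain ⟨z, hz⟩ : ∃ z : ℤ, gp.b = (z : ℝ) := exists_int_eq_of_partDen (partDen_eq_s_b hgp)
    have hz1 : 1 ≤ z := by rw [hz] at hb1; exact_mod_cast hb1
    have hrec := contsAux_recurrence (g := g) hgp rfl rfl
    rw [hrec]
    constructor
    · refine ⟨z * p + pp, ?_⟩
      show gp.b * (g.contsAux (k+1)).a + gp.a * (g.contsAux k).a = _
      rw [ha1, hz, hp, hpp]; push_cast; ring
    · refine ⟨z.toNat * q + qp, ?_⟩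
      show gp.b * (g.contsAux (k+1)).b + gp.a * (g.contsAux k).b = _
      rw [ha1, hz, hq, hqp]
      have hzt : ((z.toNat : ℕ) : ℝ) = (z : ℝ) := by
        exact_mod_cast congrArg (Int.cast : ℤ → ℝ) (Int.toNat_of_nonneg (by omega : (0:ℤ) ≤ z))
      push_cast
      rw [hzt]; ring
  intro k
  induction k using Nat.strong_induction_on with
  | _ k ih =>
    match k with
    | 0 => exact ⟨⟨1, by rw [zeroth_contAux_eq_one_zero]; norm_num⟩,
        ⟨0, by rw [zeroth_contAux_eq_one_zero]; norm_num⟩⟩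
    | 1 => exact ⟨⟨⌊α⌋, by rw [first_contAux_eq_h_one, of_h_eq_floor]⟩,
        ⟨1, by rw [first_contAux_eq_h_one]; norm_num⟩⟩
    | (k+2) => exact step k (ih k (by omega)) (ih (k+1) (by omega))

/-- Positivity of denominators. -/
lemma dens_pos_of_nt (α : ℝ) (hnt : ∀ k, ¬(GenContFract.of α).TerminatedAt k) (k : ℕ) :
    (0:ℝ) < (GenContFract.of α).dens k := by
  have h := succ_nth_fib_le_of_nth_den (v := α) (n := k) (Or.inr (hnt _))
  have : (0:ℝ) < (Nat.fib (k+1) : ℝ) := by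
    exact_mod_cast Nat.fib_pos.2 (Nat.succ_pos k)
  linarith

/-- Sign of the error term. -/
lemma sign_lemma (α : ℝ) (hnt : ∀ k, ¬(GenContFract.of α).TerminatedAt k) (k : ℕ) :
    0 < (-1)^k * (α - (GenContFract.of α).convs k) := by
  set g := GenContFract.of α with hg
  have hsome : IntFractPair.stream α (k+1) ≠ none := by
    intro h
    exact hnt k (of_terminatedAt_n_iff_succ_nth_intFractPair_stream_eq_none.2 h)
  obtain ⟨ifp_succ, hstream_succ⟩ := Option.ne_none_iff_exists'.1 hsome
  obtain ⟨ifp, hstream, hfr_ne, -⟩ := IntFractPair.succ_nth_stream_eq_some_iff.1 hstream_succ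
  have hfr_pos : 0 < ifp.fr :=
    lt_of_le_of_ne (IntFractPair.nth_stream_fr_nonneg hstream) (Ne.symm hfr_ne)
  have hsub := sub_convs_eq hstream
  simp only [hfr_ne, if_false] at hsub
  have hB : (g.contsAux (k+1)).b = g.dens k := by
    rw [den_eq_conts_b, nth_cont_eq_succ_nth_contAux]
  have hBpos : 0 < (g.contsAux (k+1)).b := by
    rw [hB]; exact dens_pos_of_nt α hnt k
  have hpB : 0 ≤ (g.contsAux k).b := zero_le_of_contsAux_b
  have hD : 0 < (g.contsAux (k+1)).b * (ifp.fr⁻¹ * (g.contsAux (k+1)).b + (g.contsAux k).b) := by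
    have : 0 < ifp.fr⁻¹ := inv_pos.2 hfr_pos
    positivity
  have hsq : ((-1:ℝ))^k * (-1:ℝ)^k = 1 := by
    rcases Nat.even_or_odd k with h | h
    · rw [h.neg_one_pow]; norm_num
    · rw [h.neg_one_pow]; norm_num
  rw [hsub, ← mul_div_assoc, hsq]
  exact one_div_pos.2 hD

theorem stmt19' (α : ℝ) (hα : Irrational α)
    (n : ℕ) (a b : ℝ) (ha : 0 ≤ a) (hb : b ≤ 1)
    (hlen : 1 / (GenContFract.of α).dens (n + 1) < b - a) (θ : ℝ) :
    ∃ j : ℕ, (j : ℝ) < (GenContFract.of α).dens (n + 1) + (GenContFract.of α).dens n ∧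
      Int.fract (θ + j * α) ∈ Set.Ioo a b := by
  set g := GenContFract.of α with hg
  have hnt : ∀ k, ¬g.TerminatedAt k := by
    intro k hk
    obtain ⟨q, hq⟩ := (terminates_iff_rat α).1 ⟨k, hk⟩
    exact hα ⟨q, hq.symm⟩
  have hdpos : ∀ k, (0:ℝ) < g.dens k := dens_pos_of_nt α hnt
  -- epsilons
  set ε0 : ℝ := g.dens n * ((-1)^n * (α - g.convs n)) with hε0
  set ε1 : ℝ := g.dens (n+1) * ((-1)^(n+1) * (α - g.convs (n+1))) with hε1
  have hε0pos : 0 < ε0 := mul_pos (hdpos n) (sign_lemma α hnt n)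
  have hε1pos : 0 < ε1 := mul_pos (hdpos (n+1)) (sign_lemma α hnt (n+1))
  -- identities
  have hid : ∀ k, g.dens k * α - g.nums k =
      (-1)^k * (g.dens k * ((-1)^k * (α - g.convs k))) := by
    intro k
    have h1 : g.convs k = g.nums k / g.dens k := conv_eq_num_div_den
    have h2 : g.dens k ≠ 0 := (hdpos k).ne'
    have h3 : ((-1:ℝ))^k * (-1:ℝ)^k = 1 := by
      rw [← pow_add]; exact Even.neg_one_pow ⟨k, by ring⟩
    have h5 : (-1:ℝ)^k * (g.dens k * ((-1)^k * (α - g.convs k)))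
        = ((-1:ℝ)^k * (-1:ℝ)^k) * (g.dens k * (α - g.convs k)) := by ring
    have h4 : g.dens k * g.convs k = g.nums k := by rw [h1]; field_simp
    rw [h5, h3, one_mul, mul_sub, h4]
  -- bounds
  have hbound : ∀ k, g.dens k * ((-1)^k * (α - g.convs k)) ≤ 1 / g.dens (k+1) := by
    intro k
    have habs := abs_sub_convs_le (v := α) (n := k) (hnt k)
    have h1 : (-1)^k * (α - g.convs k) ≤ |α - g.convs k| := by
      calc (-1)^k * (α - g.convs k) ≤ |(-1)^k * (α - g.convs k)| := le_abs_self _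
        _ = |α - g.convs k| := by rw [abs_mul, abs_pow, abs_neg, abs_one, one_pow, one_mul]
    have h2 : g.dens k * ((-1)^k * (α - g.convs k)) ≤ g.dens k * |α - g.convs k| :=
      mul_le_mul_of_nonneg_left h1 (hdpos k).le
    have h3 : g.dens k * |α - g.convs k| ≤ g.dens k * (1 / (g.dens k * g.dens (k+1))) :=
      mul_le_mul_of_nonneg_left habs (hdpos k).le
    have h4 : g.dens k * (1 / (g.dens k * g.dens (k+1))) = 1 / g.dens (k+1) := by
      rw [mul_one_div, div_eq_div_iff (mul_pos (hdpos k) (hdpos (k+1))).ne' (hdpos (k+1)).ne']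
      ring
    linarith
  have hb0 : ε0 < b - a := lt_of_le_of_lt (hbound n) hlen
  have hb1 : ε1 < b - a := by
    have h1 : ε1 ≤ 1 / g.dens (n+2) := hbound (n+1)
    have h2 : (1:ℝ) / g.dens (n+2) ≤ 1 / g.dens (n+1) :=
      one_div_le_one_div_of_le (hdpos (n+1)) (of_den_mono (v := α) (n := n+1))
    linarith
  -- integrality
  have hint := contsAux_int α hnt
  obtain ⟨⟨pn, hpn⟩, ⟨qn, hqn⟩⟩ := hint (n+1)
  obtain ⟨⟨pn1, hpn1⟩, ⟨qn1, hqn1⟩⟩ := hint (n+2)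
  have hnum_n : g.nums n = (pn : ℝ) := by
    rw [num_eq_conts_a, nth_cont_eq_succ_nth_contAux]; exact hpn
  have hden_n : g.dens n = (qn : ℝ) := by
    rw [den_eq_conts_b, nth_cont_eq_succ_nth_contAux]; exact hqn
  have hnum_n1 : g.nums (n+1) = (pn1 : ℝ) := by
    rw [num_eq_conts_a, nth_cont_eq_succ_nth_contAux]; exact hpn1
  have hden_n1 : g.dens (n+1) = (qn1 : ℝ) := by
    rw [den_eq_conts_b, nth_cont_eq_succ_nth_contAux]; exact hqn1
  have hid0 : (qn : ℝ) * α - pn = (-1)^n * ε0 := by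
    rw [← hnum_n, ← hden_n, hε0]; exact hid n
  have hid1 : (qn1 : ℝ) * α - pn1 = (-1)^(n+1) * ε1 := by
    rw [← hnum_n1, ← hden_n1, hε1]; exact hid (n+1)
  rcases Nat.even_or_odd n with he | ho
  · -- n even: qn * α = pn + ε0, qn1 * α = pn1 - ε1
    have e0 : (qn : ℝ) * α = pn + ε0 := by
      rw [he.neg_one_pow] at hid0; linarith
    have e1 : (qn1 : ℝ) * α = pn1 - ε1 := by
      have : ((-1:ℝ))^(n+1) = -1 := (Even.add_one he).neg_one_pow
      rw [this] at hid1; linarith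
    obtain ⟨j, hj, hmem⟩ := walk_lemma α θ a b ha hb qn qn1 ε0 ε1
      hε0pos hε1pos hb0 hb1 pn e0 pn1 e1
    refine ⟨j, ?_, hmem⟩
    rw [hden_n, hden_n1]
    have : (j:ℝ) < (qn:ℝ) + (qn1:ℝ) := by exact_mod_cast hj
    linarith
  · -- n odd: qn1 * α = pn1 + ε1, qn * α = pn - ε0
    have e1 : (qn1 : ℝ) * α = pn1 + ε1 := by
      have : ((-1:ℝ))^(n+1) = 1 := (Odd.add_one ho).neg_one_pow
      rw [this] at hid1; linarith
    have e0 : (qn : ℝ) * α = pn - ε0 := by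
      rw [ho.neg_one_pow] at hid0; linarith
    obtain ⟨j, hj, hmem⟩ := walk_lemma α θ a b ha hb qn1 qn ε1 ε0
      hε1pos hε0pos hb1 hb0 pn1 e1 pn e0
    refine ⟨j, ?_, hmem⟩
    rw [hden_n, hden_n1]
    have : (j:ℝ) < (qn1:ℝ) + (qn:ℝ) := by exact_mod_cast hj
    linarith


/-- If `Δ = (a,b) ⊆ [0,1]` is an interval with `|Δ| > 1/q_{n+1}`, then for any `θ`
there exists `j ∈ {0, 1, …, q_{n+1} + q_n - 1}` such that `θ + jα (mod 1) ∈ Δ`. -/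
theorem stmt19 (α : ℝ) (hα : Irrational α) (hα0 : 0 < α) (hα1 : α < 1)
    (n : ℕ) (a b : ℝ) (ha : 0 ≤ a) (hb : b ≤ 1)
    (hlen : 1 / cfDen α (n + 1) < b - a) (θ : ℝ) :
    ∃ j : ℕ, (j : ℝ) < cfDen α (n + 1) + cfDen α n ∧
      Int.fract (θ + j * α) ∈ Set.Ioo a b := by
  simp only [cfDen] at hlen ⊢
  exact stmt19' α hα n a b ha hb hlen θ
end
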